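/- Let G(t) ∈ GL(2, K[t]) with G(0) = identity, where K is a field. Then G can be written as a product of matrices of the form id + t·f(t)·e, where f ∈ K[t] and e is a 2×2 matrix over K with e² = 0 (rank-one square-zero). Equivalently, GL₁(2,K[t]) is generated by the subgroups E_δ = { id + t f(t) e_δ : f ∈ K[t] } as δ ranges over P¹_K. -/

import Mathlib

open Matrix Polynomial

section Aux
variable {K : Type*} [Field K]

private theorem div_step' (a u : K[X]) (hu : u ≠ 0) :
    ∃ g : K[X], (a + X * g * u).natDegree ≤ u.natDegree := by
  set w := u.leadingCoeff⁻¹ with hw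
  have hm : (u * C w).Monic := monic_mul_leadingCoeff_inv hu
  set q := a /ₘ (u * C w) with hq
  refine ⟨-(C w * q.divX), ?_⟩
  have h2 : a %ₘ (u * C w) + (u * C w) * q = a := modByMonic_add_div a _
  have h3 : X * q.divX + C (q.coeff 0) = q := X_mul_divX_add q
  have h1 : a + X * -(C w * q.divX) * u = C (q.coeff 0) * (u * C w) + a %ₘ (u * C w) := by
    linear_combination -h2 - u * C w * h3
  rw [h1]
  have hdu : natDegree (u * C w) = natDegree u :=
    natDegree_mul_C (inv_ne_zero (leadingCoeff_ne_zero.mpr hu))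
  refine le_trans (natDegree_add_le _ _) (max_le ?_ ?_)
  · exact le_trans (natDegree_C_mul_le _ _) hdu.le
  · exact hdu.le.trans' (natDegree_le_natDegree (le_of_lt (degree_modByMonic_lt a hm)))

private def eMat (μ ν : K) : Matrix (Fin 2) (Fin 2) K := !![μ*ν, -(μ*μ); ν*ν, -(μ*ν)]

private theorem eMat_sq (μ ν : K) : eMat μ ν * eMat μ ν = 0 := by
  simp only [eMat]
  ext i j
  fin_cases i <;> fin_cases j <;> simp [Matrix.mul_apply, Fin.sum_univ_two] <;> ring

private theorem eMat_ne (μ ν : K) (h : μ ≠ 0 ∨ ν ≠ 0) : eMat μ ν ≠ 0 := by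
  intro h0
  rcases h with h | h
  · have := congrFun (congrFun h0 0) 1
    simp [eMat] at this
    exact h this
  · have := congrFun (congrFun h0 1) 0
    simp [eMat] at this
    exact h this

private theorem sq_zero (μ ν : K) (f : K[X]) :
    ((X*f) • (eMat μ ν).map (C : K →+* K[X])) * ((X*f) • (eMat μ ν).map C) = 0 := by
  rw [Matrix.smul_mul, Matrix.mul_smul, ← Matrix.map_mul, eMat_sq]
  simp

private noncomputable def genU (μ ν : K) (f : K[X]) : GL (Fin 2) K[X] where
  val := 1 + (X*f) • (eMat μ ν).map C
  inv := 1 - (X*f) • (eMat μ ν).map C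
  val_inv := by
    have h := sq_zero μ ν f
    simp only [mul_sub, sub_mul, mul_add, add_mul, one_mul, mul_one, h]
    abel
  inv_val := by
    have h := sq_zero μ ν f
    simp only [mul_sub, sub_mul, mul_add, add_mul, one_mul, mul_one, h]
    abel

private theorem genU_val (μ ν : K) (f : K[X]) :
    ((genU μ ν f : GL (Fin 2) K[X]) : Matrix (Fin 2) (Fin 2) K[X])
      = 1 + (X*f) • (eMat μ ν).map C := rfl

private theorem genU_mem (μ ν : K) (h : μ ≠ 0 ∨ ν ≠ 0) (f : K[X]) :
    genU μ ν f ∈ { M : GL (Fin 2) K[X] |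
      ∃ (e : Matrix (Fin 2) (Fin 2) K) (f : K[X]), e ≠ 0 ∧ e * e = 0 ∧
        (M : Matrix (Fin 2) (Fin 2) K[X]) = 1 + (X * f) • e.map C } :=
  ⟨eMat μ ν, f, eMat_ne μ ν h, eMat_sq μ ν, rfl⟩

private theorem genU_entry10 (μ ν : K) (f : K[X]) (G : GL (Fin 2) K[X]) :
    ((genU μ ν f * G : GL (Fin 2) K[X]) : Matrix (Fin 2) (Fin 2) K[X]) 1 0 =
      (G : Matrix (Fin 2) (Fin 2) K[X]) 1 0 +
        X * f * (C (ν*ν) * (G : Matrix (Fin 2) (Fin 2) K[X]) 0 0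
                 - C (μ*ν) * (G : Matrix (Fin 2) (Fin 2) K[X]) 1 0) := by
  rw [Units.val_mul, genU_val, Matrix.add_mul, one_mul, Matrix.smul_mul]
  simp [Matrix.mul_apply, Fin.sum_univ_two, eMat]
  ring_nf
  tauto

private theorem genU_entry00 (μ ν : K) (f : K[X]) (G : GL (Fin 2) K[X]) :
    ((genU μ ν f * G : GL (Fin 2) K[X]) : Matrix (Fin 2) (Fin 2) K[X]) 0 0 =
      (G : Matrix (Fin 2) (Fin 2) K[X]) 0 0 +
        X * f * (C (μ*ν) * (G : Matrix (Fin 2) (Fin 2) K[X]) 0 0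
                 - C (μ*μ) * (G : Matrix (Fin 2) (Fin 2) K[X]) 1 0) := by
  rw [Units.val_mul, genU_val, Matrix.add_mul, one_mul, Matrix.smul_mul]
  simp [Matrix.mul_apply, Fin.sum_univ_two, eMat]
  ring_nf
  tauto

private theorem genU_map (μ ν : K) (f : K[X]) (G : GL (Fin 2) K[X])
    (hG : (G : Matrix (Fin 2) (Fin 2) K[X]).map (evalRingHom 0) = 1) :
    ((genU μ ν f * G : GL (Fin 2) K[X]) : Matrix (Fin 2) (Fin 2) K[X]).map (evalRingHom 0) = 1 := by
  rw [Units.val_mul, genU_val, Matrix.map_mul, hG, mul_one]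
  ext i j
  simp [Matrix.map_apply, Matrix.add_apply, Matrix.smul_apply, Matrix.one_apply]
  split <;> simp

private theorem base_case (G : GL (Fin 2) K[X])
    (hG : (G : Matrix (Fin 2) (Fin 2) K[X]).map (evalRingHom 0) = 1)
    (hc : (G : Matrix (Fin 2) (Fin 2) K[X]) 1 0 = 0) :
    G ∈ { M : GL (Fin 2) K[X] |
      ∃ (e : Matrix (Fin 2) (Fin 2) K) (f : K[X]), e ≠ 0 ∧ e * e = 0 ∧
        (M : Matrix (Fin 2) (Fin 2) K[X]) = 1 + (X * f) • e.map C } := by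
  have ha0 : eval 0 ((G : Matrix (Fin 2) (Fin 2) K[X]) 0 0) = 1 := by
    have := congrFun (congrFun hG 0) 0
    simpa [Matrix.map_apply, Matrix.one_apply] using this
  have hb0 : eval 0 ((G : Matrix (Fin 2) (Fin 2) K[X]) 0 1) = 0 := by
    have := congrFun (congrFun hG 0) 1
    simpa [Matrix.map_apply, Matrix.one_apply] using this
  have hu : IsUnit ((G : Matrix (Fin 2) (Fin 2) K[X]).det) :=
    (Matrix.isUnit_iff_isUnit_det _).mp G.isUnit
  have hdet : (G : Matrix (Fin 2) (Fin 2) K[X]).det =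
      (G : Matrix (Fin 2) (Fin 2) K[X]) 0 0 * (G : Matrix (Fin 2) (Fin 2) K[X]) 1 1 -
      (G : Matrix (Fin 2) (Fin 2) K[X]) 0 1 * (G : Matrix (Fin 2) (Fin 2) K[X]) 1 0 :=
    Matrix.det_fin_two _
  have hdet0 : eval 0 ((G : Matrix (Fin 2) (Fin 2) K[X]).det) = 1 := by
    have h1 : (evalRingHom 0) ((G : Matrix (Fin 2) (Fin 2) K[X]).det) =
        ((G : Matrix (Fin 2) (Fin 2) K[X]).map (evalRingHom 0)).det :=
      RingHom.map_det _ _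
    rw [hG, Matrix.det_one] at h1
    exact h1
  have hdet1 : (G : Matrix (Fin 2) (Fin 2) K[X]).det = 1 := by
    obtain ⟨k, -, hk⟩ := Polynomial.isUnit_iff.mp hu
    rw [← hk] at hdet0 ⊢
    rw [eval_C] at hdet0
    rw [hdet0, Polynomial.C_1]
  have had : (G : Matrix (Fin 2) (Fin 2) K[X]) 0 0 * (G : Matrix (Fin 2) (Fin 2) K[X]) 1 1 = 1 := by
    rw [hdet1, hc] at hdet
    linear_combination -hdet
  have ha1 : (G : Matrix (Fin 2) (Fin 2) K[X]) 0 0 = 1 := by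
    obtain ⟨k, -, hk⟩ := Polynomial.isUnit_iff.mp (IsUnit.of_mul_eq_one _ had)
    rw [← hk] at ha0 ⊢
    rw [eval_C] at ha0
    rw [ha0, Polynomial.C_1]
  have hd1 : (G : Matrix (Fin 2) (Fin 2) K[X]) 1 1 = 1 := by
    rw [ha1, one_mul] at had
    exact had
  have hb : (G : Matrix (Fin 2) (Fin 2) K[X]) 0 1 =
      X * ((G : Matrix (Fin 2) (Fin 2) K[X]) 0 1).divX := by
    have h := X_mul_divX_add ((G : Matrix (Fin 2) (Fin 2) K[X]) 0 1)
    rw [coeff_zero_eq_eval_zero, hb0, map_zero, add_zero] at h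
    exact h.symm
  refine ⟨!![0,1;0,0], ((G : Matrix (Fin 2) (Fin 2) K[X]) 0 1).divX, ?_, ?_, ?_⟩
  · intro h0
    have := congrFun (congrFun h0 0) 1
    simp at this
  · ext i j
    fin_cases i <;> fin_cases j <;> simp [Matrix.mul_apply, Fin.sum_univ_two]
  · ext i j
    fin_cases i <;> fin_cases j <;>
      simp [Matrix.map_apply, Matrix.one_apply, ha1, hd1, hc, ← hb]

end Aux

theorem stmt_16 {K : Type*} [Field K] (G : GL (Fin 2) K[X])
    (hG : (G : Matrix (Fin 2) (Fin 2) K[X]).map (evalRingHom 0) = 1) :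
    G ∈ Subgroup.closure { M : GL (Fin 2) K[X] |
      ∃ (e : Matrix (Fin 2) (Fin 2) K) (f : K[X]), e ≠ 0 ∧ e * e = 0 ∧
        (M : Matrix (Fin 2) (Fin 2) K[X]) = 1 + (X * f) • e.map C } := by
  set S := { M : GL (Fin 2) K[X] |
      ∃ (e : Matrix (Fin 2) (Fin 2) K) (f : K[X]), e ≠ 0 ∧ e * e = 0 ∧
        (M : Matrix (Fin 2) (Fin 2) K[X]) = 1 + (X * f) • e.map C } with hS
  suffices key : ∀ n m : ℕ, ∀ G : GL (Fin 2) K[X],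
      (G : Matrix (Fin 2) (Fin 2) K[X]).map (evalRingHom 0) = 1 →
      ((G : Matrix (Fin 2) (Fin 2) K[X]) 1 0).natDegree < n →
      ((G : Matrix (Fin 2) (Fin 2) K[X]) 0 0).natDegree < m →
      G ∈ Subgroup.closure S by
    exact key _ _ G hG (Nat.lt_succ_self _) (Nat.lt_succ_self _)
  intro n
  induction n with
  | zero => exact fun m G _ hc _ => absurd hc (Nat.not_lt_zero _)
  | succ n ihn =>
    intro m
    induction m with
    | zero => exact fun G _ _ ha => absurd ha (Nat.not_lt_zero _)
    | succ m ihm =>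
      intro G hGm hc ha
      have ha0 : eval 0 ((G : Matrix (Fin 2) (Fin 2) K[X]) 0 0) = 1 := by
        have := congrFun (congrFun hGm 0) 0
        simpa [Matrix.map_apply, Matrix.one_apply] using this
      have hc0 : eval 0 ((G : Matrix (Fin 2) (Fin 2) K[X]) 1 0) = 0 := by
        have := congrFun (congrFun hGm 1) 0
        simpa [Matrix.map_apply, Matrix.one_apply] using this
      by_cases hcz : (G : Matrix (Fin 2) (Fin 2) K[X]) 1 0 = 0
      · exact Subgroup.subset_closure (base_case G hGm hcz)
      have hane : (G : Matrix (Fin 2) (Fin 2) K[X]) 0 0 ≠ 0 := by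
        intro h
        rw [h] at ha0
        simp at ha0
      rcases le_or_gt ((G : Matrix (Fin 2) (Fin 2) K[X]) 0 0).natDegree
          ((G : Matrix (Fin 2) (Fin 2) K[X]) 1 0).natDegree with hle | hgt
      · -- reduce the degree of the (1,0) entry
        obtain ⟨μ, ν, hν, hU0, hUlt⟩ : ∃ μ ν : K, ν ≠ 0 ∧
            (C (ν*ν) * (G : Matrix (Fin 2) (Fin 2) K[X]) 0 0
              - C (μ*ν) * (G : Matrix (Fin 2) (Fin 2) K[X]) 1 0) ≠ 0 ∧
            (C (ν*ν) * (G : Matrix (Fin 2) (Fin 2) K[X]) 0 0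
              - C (μ*ν) * (G : Matrix (Fin 2) (Fin 2) K[X]) 1 0).natDegree
              < ((G : Matrix (Fin 2) (Fin 2) K[X]) 1 0).natDegree := by
          rcases lt_or_eq_of_le hle with hlt | heq
          · refine ⟨0, 1, one_ne_zero, ?_, ?_⟩
            · simpa using hane
            · calc (C ((1:K)*1) * (G : Matrix (Fin 2) (Fin 2) K[X]) 0 0
                    - C ((0:K)*1) * (G : Matrix (Fin 2) (Fin 2) K[X]) 1 0).natDegree
                  = ((G : Matrix (Fin 2) (Fin 2) K[X]) 0 0).natDegree := by simp
                _ < _ := hlt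
          · have hν0 : ((G : Matrix (Fin 2) (Fin 2) K[X]) 1 0).leadingCoeff ≠ 0 :=
              leadingCoeff_ne_zero.mpr hcz
            set μ := ((G : Matrix (Fin 2) (Fin 2) K[X]) 0 0).leadingCoeff with hμ
            set ν := ((G : Matrix (Fin 2) (Fin 2) K[X]) 1 0).leadingCoeff with hν
            have hfac : C (ν*ν) * (G : Matrix (Fin 2) (Fin 2) K[X]) 0 0
                - C (μ*ν) * (G : Matrix (Fin 2) (Fin 2) K[X]) 1 0
                = C ν * (C ν * (G : Matrix (Fin 2) (Fin 2) K[X]) 0 0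
                    - C μ * (G : Matrix (Fin 2) (Fin 2) K[X]) 1 0) := by
              rw [Polynomial.C_mul, Polynomial.C_mul]; ring
            have hu0 : C ν * (G : Matrix (Fin 2) (Fin 2) K[X]) 0 0
                - C μ * (G : Matrix (Fin 2) (Fin 2) K[X]) 1 0 ≠ 0 := by
              intro h
              have h2 := congrArg (eval 0) h
              simp [ha0, hc0] at h2
              exact hν0 h2
            have hun : (C ν * (G : Matrix (Fin 2) (Fin 2) K[X]) 0 0
                - C μ * (G : Matrix (Fin 2) (Fin 2) K[X]) 1 0).natDegree
                < ((G : Matrix (Fin 2) (Fin 2) K[X]) 1 0).natDegree := by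
              have hle2 : (C ν * (G : Matrix (Fin 2) (Fin 2) K[X]) 0 0
                  - C μ * (G : Matrix (Fin 2) (Fin 2) K[X]) 1 0).natDegree
                  ≤ ((G : Matrix (Fin 2) (Fin 2) K[X]) 1 0).natDegree := by
                refine le_trans (natDegree_sub_le _ _) (max_le ?_ ?_)
                · exact le_trans (natDegree_C_mul_le _ _) heq.le
                · exact natDegree_C_mul_le _ _
              have hcoeff : (C ν * (G : Matrix (Fin 2) (Fin 2) K[X]) 0 0
                  - C μ * (G : Matrix (Fin 2) (Fin 2) K[X]) 1 0).coeff
                  (((G : Matrix (Fin 2) (Fin 2) K[X]) 1 0).natDegree) = 0 := by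
                rw [coeff_sub, coeff_C_mul, coeff_C_mul, ← heq, coeff_natDegree, heq,
                  coeff_natDegree, ← hμ, ← hν]
                ring
              have hne2 : (C ν * (G : Matrix (Fin 2) (Fin 2) K[X]) 0 0
                  - C μ * (G : Matrix (Fin 2) (Fin 2) K[X]) 1 0).natDegree
                  ≠ ((G : Matrix (Fin 2) (Fin 2) K[X]) 1 0).natDegree := by
                intro hEq
                have hlc := leadingCoeff_ne_zero.mpr hu0
                rw [leadingCoeff, hEq] at hlc
                exact hlc hcoeff
              omega
            refine ⟨μ, ν, hν0, ?_, ?_⟩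
            · rw [hfac]
              exact mul_ne_zero (C_ne_zero.mpr hν0) hu0
            · rw [hfac]
              exact lt_of_le_of_lt (natDegree_C_mul_le _ _) hun
        obtain ⟨f, hf⟩ := div_step' ((G : Matrix (Fin 2) (Fin 2) K[X]) 1 0) _ hU0
        have h10 := genU_entry10 μ ν f G
        have hmem2 := ihn ((((genU μ ν f * G : GL (Fin 2) K[X]) :
              Matrix (Fin 2) (Fin 2) K[X]) 0 0).natDegree + 1)
          (genU μ ν f * G) (genU_map μ ν f G hGm)
          (by rw [h10]; exact lt_of_lt_of_le (lt_of_le_of_lt hf hUlt) (Nat.lt_succ_iff.mp hc))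
          (Nat.lt_succ_self _)
        have hGdec : G = (genU μ ν f)⁻¹ * (genU μ ν f * G) := (inv_mul_cancel_left _ _).symm
        rw [hGdec]
        exact Subgroup.mul_mem _
          (Subgroup.inv_mem _ (Subgroup.subset_closure (genU_mem μ ν (Or.inr hν) f))) hmem2
      · -- reduce the degree of the (0,0) entry
        obtain ⟨g, hg⟩ := div_step' ((G : Matrix (Fin 2) (Fin 2) K[X]) 0 0)
          ((G : Matrix (Fin 2) (Fin 2) K[X]) 1 0) hcz
        have h00 := genU_entry00 1 0 (-g) G
        have h10 := genU_entry10 1 0 (-g) G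
        have h10' : ((genU (1:K) 0 (-g) * G : GL (Fin 2) K[X]) :
            Matrix (Fin 2) (Fin 2) K[X]) 1 0 = (G : Matrix (Fin 2) (Fin 2) K[X]) 1 0 := by
          rw [h10]; simp
        have h00' : ((genU (1:K) 0 (-g) * G : GL (Fin 2) K[X]) :
            Matrix (Fin 2) (Fin 2) K[X]) 0 0 = (G : Matrix (Fin 2) (Fin 2) K[X]) 0 0
              + X * g * (G : Matrix (Fin 2) (Fin 2) K[X]) 1 0 := by
          rw [h00]
          simp only [mul_zero, mul_one, zero_mul, one_mul, Polynomial.C_0, Polynomial.C_1,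
            zero_sub, mul_neg, neg_mul, neg_neg, sub_zero]
        have hmem2 := ihm (genU 1 0 (-g) * G) (genU_map 1 0 (-g) G hGm)
          (by rw [h10']; exact hc)
          (by rw [h00']; exact lt_of_le_of_lt hg (lt_of_lt_of_le hgt (Nat.lt_succ_iff.mp ha)))
        have hGdec : G = (genU (1:K) 0 (-g))⁻¹ * (genU 1 0 (-g) * G) :=
          (inv_mul_cancel_left _ _).symm
        rw [hGdec]
        exact Subgroup.mul_mem _
          (Subgroup.inv_mem _ (Subgroup.subset_closure
            (genU_mem 1 0 (Or.inl one_ne_zero) (-g)))) hmem2
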